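/- With h(z,x,y) = Σ_{k≥0} (−1)^k q^{k(k−1)/2} ∏_{j=0}^{k−1}(x+q^j y)/∏_{j=1}^{k}(1−q^j) z^k and H(z,x,y) = Σ_{k≥0} (−1)^k q^{k²−k} (yz)^k/((q;q)_k (xz;q)_k), the identity h(z,x,y)·e(xz) = H(z,x,y) holds, where e(t) = Σ_{n≥0} t^n/(q;q)_n is the q-exponential series. Equivalently h(z,x,y)/H(z,x,y) = 1/e(xz). -/

import Mathlib

noncomputable section
open PowerSeries Finset

/-- The field `ℚ(q, x, y)` of rational functions in three indeterminates. -/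
abbrev K : Type := FractionRing (MvPolynomial (Fin 3) ℚ)

/-- The indeterminate `q`. -/
def q : K := algebraMap (MvPolynomial (Fin 3) ℚ) K (MvPolynomial.X 0)
/-- The indeterminate `x`. -/
def x : K := algebraMap (MvPolynomial (Fin 3) ℚ) K (MvPolynomial.X 1)
/-- The indeterminate `y`. -/
def y : K := algebraMap (MvPolynomial (Fin 3) ℚ) K (MvPolynomial.X 2)

/-- The coefficient `h_k(a,b) = (−1)^k q^{k(k−1)/2} ∏_{j=0}^{k−1}(a+q^j b) / ∏_{j=1}^{k}(1−q^j)`. -/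
def hk (a b : K) (k : ℕ) : K :=
  (-1) ^ k * q ^ (k.choose 2) * (∏ j ∈ range k, (a + q ^ j * b)) /
    (∏ j ∈ range k, (1 - q ^ (j + 1)))

/-- The series `h(z,a,b) = Σ_k h_k(a,b) z^k`. -/
def hser (a b : K) : PowerSeries K := PowerSeries.mk (hk a b)

/-- The polynomial `(xz;q)_k = ∏_{i=0}^{k-1} (1 − q^i x z)` as a power series in `z`. -/
def Pk (k : ℕ) : PowerSeries K := ∏ i ∈ range k, (1 - C (q ^ i * x) * X)

/-- The series `H(z,x,y) = Σ_{k≥0} (−1)^k q^{k²−k} (yz)^k / ((q;q)_k (xz;q)_k)`,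
written via its `z`-coefficients: the coefficient of `z^m` is
`Σ_{k=0}^{m} (−1)^k q^{k²−k} y^k / (q;q)_k · [z^{m−k}] (xz;q)_k⁻¹`. -/
def Hser : PowerSeries K :=
  PowerSeries.mk fun m =>
    ∑ k ∈ range (m + 1),
      (-1) ^ k * q ^ (k ^ 2 - k) * y ^ k / (∏ j ∈ range k, (1 - q ^ (j + 1))) *
        coeff (m - k) (Pk k)⁻¹

/-- The `q`-exponential series evaluated at `xz`: `e(xz) = Σ_n (xz)^n / (q;q)_n`. -/
def exz : PowerSeries K :=
  PowerSeries.mk fun n => x ^ n / ∏ j ∈ range n, (1 - q ^ (j + 1))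

lemma q_pow_ne_one (j : ℕ) (hj : 1 ≤ j) : q ^ j ≠ (1 : K) := by
  intro h
  have hinj := IsFractionRing.injective (MvPolynomial (Fin 3) ℚ) K
  have : (MvPolynomial.X 0 : MvPolynomial (Fin 3) ℚ) ^ j = 1 := by
    apply hinj
    simpa [q, map_pow] using h
  have h2 := congrArg (MvPolynomial.eval (fun _ => (2:ℚ))) this
  simp [MvPolynomial.eval_pow] at h2
  have : (2:ℚ)^j ≥ 2^1 := pow_le_pow_right₀ (by norm_num) hj
  norm_num [h2] at this

lemma one_sub_q_pow_ne (j : ℕ) : (1 : K) - q ^ (j + 1) ≠ 0 := by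
  intro h
  exact q_pow_ne_one (j+1) (Nat.le_add_left 1 j) (by linear_combination -h)

/-- `(q;q)_n`. -/
def P (n : ℕ) : K := ∏ j ∈ range n, (1 - q ^ (j + 1))

lemma P_ne (n : ℕ) : P n ≠ 0 :=
  Finset.prod_ne_zero_iff.2 fun j _ => one_sub_q_pow_ne j

lemma P_succ (n : ℕ) : P (n + 1) = P n * (1 - q ^ (n + 1)) := Finset.prod_range_succ _ n

/-- Gaussian binomial coefficient as an element of `K`. -/
def qb (n i : ℕ) : K := if i ≤ n then P n / (P i * P (n - i)) else 0

lemma qb_zero (n : ℕ) : qb n 0 = 1 := by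
  simp [qb, P, Nat.zero_le]
  exact P_ne n

lemma qb_self (n : ℕ) : qb n n = 1 := by
  simp only [qb, if_pos le_rfl, Nat.sub_self]
  rw [show P 0 = 1 by simp [P], mul_one]
  exact div_self (P_ne n)

lemma qb_of_gt {n i : ℕ} (h : n < i) : qb n i = 0 := by simp [qb, Nat.not_le.2 h]

lemma qb_pascal (n i : ℕ) :
    qb (n + 1) (i + 1) = qb n (i + 1) + q ^ (n - i) * qb n i := by
  rcases Nat.lt_or_ge n i with h | h
  · rw [qb_of_gt h, qb_of_gt (by omega), qb_of_gt (by omega)]; ring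
  rcases Nat.eq_or_lt_of_le h with rfl | h
  · rw [qb_self, qb_self, qb_of_gt (by omega)]
    simp
  -- now i + 1 ≤ n
  have hi1 : i + 1 ≤ n := h
  rw [qb, qb, qb, if_pos (by omega), if_pos hi1, if_pos (by omega)]
  have e1 : n + 1 - (i + 1) = n - i := by omega
  have e2 : n - i = (n - (i + 1)) + 1 := by omega
  rw [e1, P_succ n, e2, P_succ (n - (i+1)), P_succ i]
  have hni : n - (i + 1) + 1 = n - i := by omega
  rw [hni]
  have hB := P_ne i
  have hC := P_ne (n - (i+1))
  have hu := one_sub_q_pow_ne i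
  have hv : (1:K) - q ^ (n - i) ≠ 0 := by rw [e2]; exact one_sub_q_pow_ne _
  rw [show n + 1 = (i+1) + (n-i) by omega, pow_add]
  field_simp
  ring

lemma choose_two_succ (i : ℕ) : (i+1).choose 2 = i.choose 2 + i := by
  rw [Nat.choose_succ_succ]
  simp [Nat.choose_one_right, Nat.add_comm]

/-- Gauss's `q`-binomial theorem. -/
lemma gauss (a b : K) (n : ℕ) : ∏ j ∈ range n, (a + q ^ j * b)
    = ∑ i ∈ range (n+1), qb n i * q ^ (i.choose 2) * a ^ (n - i) * b ^ i := by
  induction n with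
  | zero => simp [qb_zero]
  | succ n ih =>
    rw [prod_range_succ, ih, sum_mul]
    simp only [mul_add]
    rw [sum_add_distrib]
    -- split the `*a` sum, shifting index
    rw [Finset.sum_range_succ' (fun i => qb n i * q ^ (i.choose 2) * a ^ (n - i) * b ^ i * a)]
    -- target side
    rw [Finset.sum_range_succ' (fun i => qb (n+1) i * q ^ (i.choose 2) * a ^ (n+1 - i) * b ^ i)]
    have hz : (qb n (n+1) * q ^ ((n+1).choose 2) * a ^ (n - (n+1)) * b ^ (n+1) * a) = 0 := by
      rw [qb_of_gt (Nat.lt_succ_self n)]; ring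
    rw [show (∑ i ∈ range n, qb n (i+1) * q ^ ((i+1).choose 2) * a ^ (n - (i+1)) * b ^ (i+1) * a)
        = ∑ i ∈ range (n+1), qb n (i+1) * q ^ ((i+1).choose 2) * a ^ (n - (i+1)) * b ^ (i+1) * a by
      rw [Finset.sum_range_succ, hz, add_zero]]
    have h0 : qb n 0 * q ^ (Nat.choose 0 2) * a ^ (n - 0) * b ^ 0 * a
        = qb (n+1) 0 * q ^ (Nat.choose 0 2) * a ^ (n + 1 - 0) * b ^ 0 := by
      rw [qb_zero, qb_zero]
      simp [pow_succ]
    rw [add_right_comm, h0]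
    congr 1
    rw [← Finset.sum_add_distrib]
    apply Finset.sum_congr rfl
    intro i hi
    have hin : i ≤ n := Nat.lt_succ_iff.1 (Finset.mem_range.1 hi)
    rw [qb_pascal, choose_two_succ]
    have e1 : n + 1 - (i + 1) = n - i := by omega
    rw [e1]
    rcases Nat.eq_or_lt_of_le hin with rfl | hlt
    · rw [qb_of_gt (Nat.lt_succ_self i), Nat.sub_self]
      rw [pow_add]
      ring
    · have e2 : n - (i+1) + 1 = n - i := by omega
      have e3 : a ^ (n - (i+1)) * a = a ^ (n - i) := by rw [← pow_succ, e2]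
      have e4 : q ^ (n - i) * q ^ i = q ^ n := by rw [← pow_add]; congr 1; omega
      rw [pow_add]
      calc qb n (i+1) * (q ^ (i.choose 2) * q ^ i) * a ^ (n - (i+1)) * b ^ (i+1) * a
            + qb n i * q ^ (i.choose 2) * a ^ (n-i) * b ^ i * (q ^ n * b)
          = qb n (i+1) * (q ^ (i.choose 2) * q ^ i) * (a ^ (n - (i+1)) * a) * b ^ (i+1)
            + qb n i * q ^ (i.choose 2) * a ^ (n-i) * b ^ i * ((q ^ (n-i) * q ^ i) * b) := by
            rw [e4]; ring
        _ = (qb n (i+1) + q ^ (n-i) * qb n i) * (q ^ (i.choose 2) * q ^ i) * a ^ (n-i) * b ^ (i+1) := by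
            rw [e3]; ring

/-- `(q^k;q)_n`. -/
def A (k n : ℕ) : K := ∏ j ∈ range n, (1 - q ^ (k + j))

/-- The candidate inverse of `Pk k`. -/
def Gk (k : ℕ) : PowerSeries K := PowerSeries.mk fun n => x ^ n * A k n / P n

lemma A_succ (k n : ℕ) : A k (n+1) = A k n * (1 - q ^ (k + n)) := Finset.prod_range_succ _ n

lemma A_succ' (k n : ℕ) : A k (n+1) = (1 - q ^ k) * A (k+1) n := by
  rw [A, Finset.prod_range_succ']
  simp only [Nat.add_zero]
  rw [mul_comm]
  congr 1
  apply Finset.prod_congr rfl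
  intro j _
  congr 2
  omega

lemma Gk_step (k : ℕ) : (1 - C (q ^ k * x) * X) * Gk (k+1) = Gk k := by
  ext n
  rw [sub_mul, one_mul, map_sub, mul_assoc]
  cases n with
  | zero =>
    simp [Gk, A, P]
  | succ n =>
    rw [coeff_C_mul, coeff_succ_X_mul]
    simp only [Gk, coeff_mk]
    rw [P_succ, A_succ' k n, A_succ (k+1) n]
    have h1 := P_ne n
    have h2 := one_sub_q_pow_ne n
    have e : q ^ (k + 1 + n) = q ^ k * q ^ (n + 1) := by rw [← pow_add]; congr 1; omega
    field_simp
    rw [e]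
    ring

lemma Pk_mul_Gk (k : ℕ) : Pk k * Gk k = 1 := by
  induction k with
  | zero =>
    have : Gk 0 = 1 := by
      ext n
      cases n with
      | zero => simp [Gk, A, P]
      | succ n =>
        rw [Gk, coeff_mk]
        have : A 0 (n+1) = 0 := by
          rw [A_succ']
          simp
        rw [this]
        simp [coeff_one]
    rw [Pk, this]
    simp
  | succ k ih =>
    rw [Pk, Finset.prod_range_succ, ← Pk, mul_assoc, Gk_step, ih]

lemma coeff_Pk_inv (k n : ℕ) : coeff n (Pk k)⁻¹ = x ^ n * A k n / P n := by
  have hc : constantCoeff (Pk k) ≠ 0 := by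
    rw [Pk, map_prod]
    simp [constantCoeff_X]
  rw [(PowerSeries.inv_eq_iff_mul_eq_one hc).2 (by rw [mul_comm]; exact Pk_mul_Gk k), Gk, coeff_mk]

lemma choose_two_add (k : ℕ) : k.choose 2 + k.choose 2 = k^2 - k := by
  induction k with
  | zero => rfl
  | succ n ih =>
    rw [choose_two_succ]
    have h1 : (n+1)^2 = n^2 + 2*n + 1 := by ring
    have h2 : n ≤ n^2 := Nat.le_self_pow two_ne_zero n
    omega

lemma choose_add_two (i j : ℕ) : (i+j).choose 2 = i.choose 2 + j.choose 2 + i*j := by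
  induction j with
  | zero => simp
  | succ n ih =>
    rw [show i + (n+1) = (i+n)+1 by omega, choose_two_succ, ih, choose_two_succ]
    ring

lemma A_eq_sum (i n : ℕ) :
    A i n = ∑ j ∈ range (n+1), qb n j * q ^ (j.choose 2) * ((-1)^j * q^(i*j)) := by
  have h : A i n = ∏ l ∈ range n, ((1:K) + q ^ l * (-q^i)) := by
    apply Finset.prod_congr rfl
    intro l _
    rw [pow_add]
    ring
  rw [h, gauss]
  apply Finset.sum_congr rfl
  intro j _
  rw [one_pow, mul_one, neg_pow, pow_mul]

lemma P_def (n : ℕ) : (∏ j ∈ range n, (1 - q ^ (j + 1))) = P n := rfl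

/-- The double-sum summand. -/
def T (m k i : ℕ) : K :=
  (-1)^k * q^(k.choose 2) * qb k i * q^(i.choose 2) * x^(k-i) * y^i * x^(m-k) / (P k * P (m-k))

lemma T_eq_zero {m k i : ℕ} (h : k < i) : T m k i = 0 := by
  simp [T, qb_of_gt h]

lemma stepA (m k : ℕ) (hkm : k ≤ m) :
    hk x y k * (x ^ (m-k) / P (m-k)) = ∑ i ∈ range (m+1), T m k i := by
  rw [hk, gauss x y k, P_def]
  rw [show ((-1:K)^k * q^(k.choose 2) *
        (∑ i ∈ range (k+1), qb k i * q ^ (i.choose 2) * x ^ (k - i) * y ^ i) / P k *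
        (x ^ (m-k) / P (m-k))) = ∑ i ∈ range (k+1), T m k i by
    rw [Finset.mul_sum, Finset.sum_div, Finset.sum_mul]
    apply Finset.sum_congr rfl
    intro i _
    rw [T]
    ring]
  apply Finset.sum_subset (Finset.range_subset_range.2 (by omega))
  intro i _ hi
  exact T_eq_zero (by simpa using hi)

lemma stepC (m i : ℕ) (him : i ≤ m) :
    ∑ k ∈ range (m+1), T m k i
    = (-1)^i * q^(i^2-i) * y^i / P i * (x^(m-i) * A i (m-i) / P (m-i)) := by
  rw [range_eq_Ico, ← Finset.sum_Ico_consecutive _ (Nat.zero_le i) (show i ≤ m+1 by omega)]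
  rw [Finset.sum_eq_zero (fun k hk => T_eq_zero (Finset.mem_Ico.1 hk).2), zero_add]
  rw [Finset.sum_Ico_eq_sum_range]
  have hn : m + 1 - i = (m-i) + 1 := by omega
  rw [hn, A_eq_sum i (m-i)]
  rw [Finset.mul_sum, Finset.sum_div, Finset.mul_sum]
  apply Finset.sum_congr rfl
  intro j hj
  have hjn : j ≤ m - i := Nat.lt_succ_iff.1 (Finset.mem_range.1 hj)
  rw [T]
  have e1 : i + j - i = j := by omega
  have e2 : m - (i + j) = (m - i) - j := by omega
  rw [e1, e2]
  rw [show qb (i+j) i = P (i+j) / (P i * P j) by rw [qb, if_pos (Nat.le_add_right i j), e1]]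
  rw [show qb (m-i) j = P (m-i) / (P j * P (m-i-j)) by rw [qb, if_pos hjn]]
  rw [show ((-1:K))^(i+j) = (-1)^i * (-1)^j from pow_add _ _ _]
  rw [show (q:K)^((i+j).choose 2) = q^(i.choose 2) * q^(j.choose 2) * q^(i*j) by
    rw [choose_add_two, pow_add, pow_add]]
  rw [show (q:K)^(i^2-i) = q^(i.choose 2) * q^(i.choose 2) by rw [← pow_add, choose_two_add]]
  rw [show (x:K)^(m-i) = x^j * x^(m-i-j) by rw [← pow_add]; congr 1; omega]
  have h1 := P_ne i
  have h2 := P_ne j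
  have h3 := P_ne (m-i)
  have h4 := P_ne (m-i-j)
  have h5 := P_ne (i+j)
  field_simp

lemma key (m : ℕ) :
    ∑ k ∈ range (m+1), hk x y k * (x ^ (m-k) / P (m-k))
    = ∑ k ∈ range (m+1),
        (-1)^k * q^(k^2-k) * y^k / P k * (x^(m-k) * A k (m-k) / P (m-k)) := by
  rw [Finset.sum_congr rfl (fun k hk => stepA m k (Nat.lt_succ_iff.1 (Finset.mem_range.1 hk)))]
  rw [Finset.sum_comm]
  exact Finset.sum_congr rfl (fun i hi => stepC m i (Nat.lt_succ_iff.1 (Finset.mem_range.1 hi)))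

/-- Formula (2.26): `h(z,x,y)·e(xz) = H(z,x,y)`. -/
theorem h_mul_qexp_eq_H : hser x y * exz = Hser := by
  ext m
  rw [PowerSeries.coeff_mul, Finset.Nat.sum_antidiagonal_eq_sum_range_succ_mk]
  simp only [hser, exz, Hser, coeff_mk, coeff_Pk_inv, P_def]
  exact key m

end
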